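/- Let R be a symmetric CGL extension of length N with y-elements y_1, …, y_N as in the standard theory, and let u be the product of the homogeneous prime elements of R (i.e., u = ∏ y_l over all l with s(l) = +∞, in some order). Then for every k ∈ [1,N], x_k u = (∏_{j=1}^N λ_{kj}) u x_k. Consequently, conjugation a ↦ u^{-1} a u on Fract(R) restricts to the Nakayama automorphism ν of R, i.e., a u = u ν(a) for all a ∈ R. -/

import Mathlib

/-- The ordered monomial `x 0 ^ m 0 * x 1 ^ m 1 * ⋯ * x (N-1) ^ m (N-1)`. -/
def orderedMonomial {R : Type*} [Ring R] {N : ℕ} (x : Fin N → R) (m : Fin N → ℕ) : R :=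
  ((List.finRange N).map fun i => x i ^ m i).prod

/-- The reverse-ordered monomial `x (N-1) ^ m (N-1) * ⋯ * x 0 ^ m 0`. -/
def revMonomial {R : Type*} [Ring R] {N : ℕ} (x : Fin N → R) (m : Fin N → ℕ) : R :=
  (((List.finRange N).reverse).map fun i => x i ^ m i).prod

/-- `R` has the PBW property for the generators `x` : the ordered monomials form a
`K`-basis. -/
def IsPBW (K : Type*) {R : Type*} [Field K] [Ring R] [Algebra K R] {N : ℕ}
    (x : Fin N → R) : Prop :=
  LinearIndependent K (orderedMonomial x) ∧
    Submodule.span K (Set.range (orderedMonomial x)) = ⊤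

/-- The unital subalgebra `R_{[a,b]}` generated by the `x i` with `a ≤ i ≤ b`
(`0`-based indices, bounds taken in `ℤ`). -/
def genSub (K : Type*) {R : Type*} [Field K] [Ring R] [Algebra K R] {N : ℕ}
    (x : Fin N → R) (a b : ℤ) : Subalgebra K R :=
  Algebra.adjoin K {r | ∃ i : Fin N, a ≤ (i : ℤ) ∧ (i : ℤ) ≤ b ∧ r = x i}

/-- A diagonalized iterated Ore extension: PBW basis plus relations
`x k * x j = λ_{kj} x j x k + δ_k(x_j)` with `δ_k(x_j) ∈ R_{[1,k-1]}`. -/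
def IsDiagonalizedIOE (K : Type*) {R : Type*} [Field K] [Ring R] [Algebra K R] {N : ℕ}
    (x : Fin N → R) (lam : Fin N → Fin N → Kˣ) : Prop :=
  IsPBW K x ∧
    ∀ j k : Fin N, j < k →
      x k * x j - (lam k j : K) • (x j * x k) ∈ genSub K x 0 ((k : ℤ) - 1)

/-- Multiplicative skew-symmetry of the `λ`-matrix. -/
def MulSkewSymm {K : Type*} [Field K] {N : ℕ} (lam : Fin N → Fin N → Kˣ) : Prop :=
  (∀ i, lam i i = 1) ∧ ∀ i j, lam j i = (lam i j)⁻¹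

/-- Reversibility: a presentation with the variables in descending order, i.e. the
reversed monomials form a basis and `δ*_j(x_k) = x j x k - λ_{jk} x k x j` lies in the
subalgebra generated by `x (j+1), …, x (N-1)`. -/
def IsReversible (K : Type*) {R : Type*} [Field K] [Ring R] [Algebra K R] {N : ℕ}
    (x : Fin N → R) (lam : Fin N → Fin N → Kˣ) : Prop :=
  (LinearIndependent K (revMonomial x) ∧
      Submodule.span K (Set.range (revMonomial x)) = ⊤) ∧
    ∀ j k : Fin N, j < k →
      x j * x k - (lam j k : K) • (x k * x j) ∈ genSub K x ((j : ℤ) + 1) (N - 1)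

/-- Let `R` be a symmetric CGL extension with `y`-elements
`y_1, …, y_N`, and let `u` be the product (in some order `L`) of the homogeneous prime
elements `y l`, `l ∈ S = {l | s(l) = +∞}`.  Then `x_k u = (∏_j λ_{kj}) u x_k` for all
`k`, and consequently `a u = u ν(a)` for all `a ∈ R`, where `ν` is the Nakayama
automorphism of `R` (characterized on the generators by `ν(x_k) = (∏_j λ_{kj}) x_k`).
Here `T l = {p^m(l) | 0 ≤ m ≤ O₋(l)}`, these sets partition `[1,N]`, and
`y_l x_j = α_{jl}⁻¹ x_j y_l` with `α_{jl} = ∏_{i ∈ T l} λ_{ji}`. -/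
theorem prime_product_conjugation_is_nakayama {K R : Type*} [Field K] [Ring R]
    [Algebra K R] {N : ℕ} (x : Fin N → R) (lam : Fin N → Fin N → Kˣ)
    (hdiag : IsDiagonalizedIOE K x lam) (hskew : MulSkewSymm lam)
    (hgen : Algebra.adjoin K (Set.range x) = ⊤)
    (y : Fin N → R) (Sset : Finset (Fin N)) (T : Fin N → Finset (Fin N))
    (hpart : ∀ j : Fin N, ∃! l : Fin N, l ∈ Sset ∧ j ∈ T l)
    (hcomm : ∀ l ∈ Sset, ∀ j : Fin N,
      y l * x j = (((∏ i ∈ T l, lam j i)⁻¹ : Kˣ) : K) • (x j * y l))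
    (L : List (Fin N)) (hLnd : L.Nodup) (hLmem : ∀ l : Fin N, l ∈ L ↔ l ∈ Sset)
    (ν : R ≃ₐ[K] R)
    (hν : ∀ k : Fin N, ν (x k) = ((∏ j : Fin N, lam k j : Kˣ) : K) • x k) :
    (∀ k : Fin N,
      x k * (L.map y).prod =
        ((∏ j : Fin N, lam k j : Kˣ) : K) • ((L.map y).prod * x k)) ∧
    (∀ a : R, a * (L.map y).prod = (L.map y).prod * ν a) := by
  -- per-element commutation, written the other way round
  have hcomm' : ∀ l ∈ Sset, ∀ k : Fin N,
      x k * y l = (((∏ i ∈ T l, lam k i) : Kˣ) : K) • (y l * x k) := by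
    intro l hl k
    rw [hcomm l hl k, smul_smul]
    norm_cast
    rw [mul_inv_cancel]
    simp
  -- commuting x k past a product of y's over a list contained in Sset
  have key : ∀ (M : List (Fin N)), (∀ l ∈ M, l ∈ Sset) → ∀ k : Fin N,
      x k * (M.map y).prod =
        (((M.map fun l => ∏ i ∈ T l, lam k i).prod : Kˣ) : K) •
          ((M.map y).prod * x k) := by
    intro M
    induction M with
    | nil => intro _ k; simp
    | cons l M ih =>
      intro hM k
      have hl : l ∈ Sset := hM l List.mem_cons_self
      have hM' : ∀ m ∈ M, m ∈ Sset := fun m hm => hM m (List.mem_cons_of_mem _ hm)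
      simp only [List.map_cons, List.prod_cons]
      rw [← mul_assoc, hcomm' l hl k, smul_mul_assoc, mul_assoc, ih hM' k,
        mul_smul_comm, smul_smul, mul_assoc]
      norm_cast
  -- identify the scalar with the full product
  have hscal : ∀ k : Fin N,
      ((L.map fun l => ∏ i ∈ T l, lam k i).prod : Kˣ) = ∏ j : Fin N, lam k j := by
    intro k
    classical
    have hLS : L.toFinset = Sset := by
      ext l; simp [hLmem l]
    rw [← List.prod_toFinset _ hLnd, hLS]
    have hdisj : (Sset : Set (Fin N)).PairwiseDisjoint T := by
      intro a ha b hb hab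
      refine Finset.disjoint_left.mpr fun j hja hjb => hab ?_
      obtain ⟨m, _, hm⟩ := hpart j
      rw [hm a ⟨ha, hja⟩, hm b ⟨hb, hjb⟩]
    have hcover : Sset.biUnion T = Finset.univ := by
      ext j
      simp only [Finset.mem_biUnion, Finset.mem_univ, iff_true]
      obtain ⟨l, ⟨hl, hj⟩, _⟩ := hpart j
      exact ⟨l, hl, hj⟩
    rw [← hcover, Finset.prod_biUnion hdisj]
  have part1 : ∀ k : Fin N,
      x k * (L.map y).prod =
        ((∏ j : Fin N, lam k j : Kˣ) : K) • ((L.map y).prod * x k) := by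
    intro k
    rw [key L (fun l hl => (hLmem l).mp hl) k, hscal k]
  refine ⟨part1, fun a => ?_⟩
  have ha : a ∈ Algebra.adjoin K (Set.range x) := hgen ▸ Algebra.mem_top
  induction ha using Algebra.adjoin_induction with
  | mem b hb =>
    obtain ⟨k, rfl⟩ := hb
    rw [part1 k, hν k, mul_smul_comm]
  | algebraMap r =>
    rw [AlgEquiv.commutes, Algebra.commutes]
  | add b c _ _ hb hc =>
    rw [add_mul, hb, hc, map_add, mul_add]
  | mul b c _ _ hb hc =>
    rw [mul_assoc, hc, ← mul_assoc, hb, map_mul, mul_assoc]
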